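/- arXiv:1006.2888 — 2 statements merged into one kernel-verified Lean document; each statement's English description precedes it below -/
import Mathlib

section
/- Let p̄ = (p_1, p_2, ...) be a sequence of probabilities with p_l < 1 for all l > 0. Assume that for some ε > 0 the set {n ∈ ℕ : ∑_{l=1}^n p_l ≥ n^ε} is unbounded. Then for some q̄ ∈ Gen_3(p̄) and the L-sentence ψ := ∃x ∀y ¬(x ∼ y) (asserting the existence of an isolated vertex), both ψ and ¬ψ hold infinitely often in M^n_{q̄}. -/
open FirstOrder Filter

/-- The simple graph on `Fin n` determined by a boolean function on unordered pairs. -/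
def graphOf {n : ℕ} (f : Sym2 (Fin n) → Bool) : SimpleGraph (Fin n) where
  Adj i j := i ≠ j ∧ f s(i, j)
  symm := by
    constructor
    intro i j h
    exact ⟨Ne.symm h.1, by rw [Sym2.eq_swap]; exact h.2⟩
  loopless := by constructor; intro i h; exact h.1 rfl

/-- The probability that the pair `e` is an edge, given edge probabilities `p`
indexed by the distance between the endpoints. -/
noncomputable def edgeProb (p : ℕ → ℝ) {n : ℕ} (e : Sym2 (Fin n)) : ℝ :=
  Sym2.lift ⟨fun i j => p (Nat.dist i.val j.val),
    fun i j => by simp only [Nat.dist_comm]⟩ e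

/-- The probability weight of a particular configuration of edges. -/
noncomputable def weight (p : ℕ → ℝ) {n : ℕ} (f : Sym2 (Fin n) → Bool) : ℝ :=
  ∏ e : Sym2 (Fin n),
    if e.IsDiag then (if f e then 0 else 1)
    else (if f e then edgeProb p e else 1 - edgeProb p e)

open Classical in
/-- The probability that the random graph `M^n_{p̄}` (on vertex set `Fin n`,
representing `[n] = {1,…,n}`, where distinct vertices at distance `d` are joined
independently with probability `p d`) satisfies the event `E`. -/
noncomputable def probEvent (p : ℕ → ℝ) (n : ℕ) (E : SimpleGraph (Fin n) → Prop) : ℝ :=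
  ∑ f : Sym2 (Fin n) → Bool, if E (graphOf f) then weight p f else 0

/-- The probability that `M^n_{p̄}` satisfies the first-order sentence `ψ`
in the language of graphs. -/
noncomputable def probSat (p : ℕ → ℝ) (n : ℕ) (ψ : Language.graph.Sentence) : ℝ :=
  probEvent p n (fun G => @Language.Sentence.Realize _ _ G.structure ψ)

/-- `M^n_{p̄}` satisfies the 0-1 law for first order logic. -/
def ZeroOneLaw (p : ℕ → ℝ) : Prop :=
  ∀ ψ : Language.graph.Sentence, ∃ c : ℝ, (c = 0 ∨ c = 1) ∧
    Tendsto (fun n => probSat p n ψ) atTop (nhds c)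

/-- `M^n_{p̄}` satisfies the convergence law for first order logic. -/
def ConvergenceLaw (p : ℕ → ℝ) : Prop :=
  ∀ ψ : Language.graph.Sentence, ∃ c : ℝ,
    Tendsto (fun n => probSat p n ψ) atTop (nhds c)

/-- `M^n_{p̄}` satisfies the weak convergence law for first order logic. -/
def WeakConvergenceLaw (p : ℕ → ℝ) : Prop :=
  ∀ ψ : Language.graph.Sentence,
    limsup (fun n => probSat p n ψ) atTop - liminf (fun n => probSat p n ψ) atTop < 1

/-- `q̄ ∈ Gen₁(p̄)`: `q̄` is obtained from `p̄` by inserting zeros (indices start at 1). -/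
def Gen1 (p q : ℕ → ℝ) : Prop :=
  ∃ f : ℕ → ℕ, (∀ i j, 1 ≤ i → i < j → f i < f j) ∧ (∀ i, 1 ≤ i → 1 ≤ f i) ∧
    (∀ i, 1 ≤ i → q (f i) = p i) ∧
    (∀ l, 1 ≤ l → (∀ i, 1 ≤ i → f i ≠ l) → q l = 0)

/-- `q̄ ∈ Gen₂(p̄)`: `q̄` is obtained from `p̄` by decreasing entries. -/
def Gen2 (p q : ℕ → ℝ) : Prop :=
  ∀ l, 1 ≤ l → q l ∈ Set.Icc (0 : ℝ) (p l)

/-- `q̄ ∈ Gen₃(p̄)`: `q̄` is obtained from `p̄` by replacing some entries with zero. -/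
def Gen3 (p q : ℕ → ℝ) : Prop :=
  ∀ l, 1 ≤ l → q l = 0 ∨ q l = p l

/-- The condition `lim_{n→∞} log(∏_{i=1}^n (1-p_i))/log n = 0`. -/
def StarCondition (p : ℕ → ℝ) : Prop :=
  Tendsto (fun n : ℕ => Real.log (∏ i ∈ Finset.Icc 1 n, (1 - p i)) / Real.log n)
    atTop (nhds 0)

section Aux
open Finset

-- ## auxiliary

open Finset

noncomputable def wfac (q : ℕ → ℝ) {n : ℕ} (e : Sym2 (Fin n)) (b : Bool) : ℝ :=
  if e.IsDiag then (if b then 0 else 1)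
  else (if b then edgeProb q e else 1 - edgeProb q e)

lemma weight_eq_prod_wfac (q : ℕ → ℝ) {n : ℕ} (f : Sym2 (Fin n) → Bool) :
    weight q f = ∏ e, wfac q e (f e) := rfl

lemma wfac_sum (q : ℕ → ℝ) {n : ℕ} (e : Sym2 (Fin n)) :
    wfac q e true + wfac q e false = 1 := by
  unfold wfac; split <;> simp

lemma edgeProb_mk (q : ℕ → ℝ) {n : ℕ} (i j : Fin n) :
    edgeProb q s(i, j) = q (Nat.dist i.val j.val) := rfl

/-- key sum-product identity -/
lemma sum_prod_bool {κ : Type*} [Fintype κ] [DecidableEq κ] (h : κ → Bool → ℝ) :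
    ∑ f : κ → Bool, ∏ i, h i (f i) = ∏ i, (h i true + h i false) := by
  have : ∀ i : κ, h i true + h i false = ∑ b : Bool, h i b := by
    intro i; simp [Fintype.sum_bool]
  simp_rw [this]
  rw [Fintype.prod_sum (fun i b => h i b)]

lemma expect_prod (q : ℕ → ℝ) {n : ℕ} (T : Finset (Sym2 (Fin n))) (g : Sym2 (Fin n) → Bool → ℝ) :
    ∑ f : Sym2 (Fin n) → Bool, (∏ e ∈ T, g e (f e)) * weight q f
      = ∏ e ∈ T, (g e true * wfac q e true + g e false * wfac q e false) := by
  have h1 : ∀ f : Sym2 (Fin n) → Bool,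
      (∏ e ∈ T, g e (f e)) * weight q f
        = ∏ e, ((if e ∈ T then g e (f e) else 1) * wfac q e (f e)) := by
    intro f
    rw [Finset.prod_mul_distrib, Fintype.prod_extend_by_one, weight_eq_prod_wfac]
  simp_rw [h1]
  rw [sum_prod_bool (fun e b => (if e ∈ T then g e b else 1) * wfac q e b)]
  have h2 : ∀ e : Sym2 (Fin n),
      (if e ∈ T then g e true else 1) * wfac q e true
        + (if e ∈ T then g e false else 1) * wfac q e false
      = if e ∈ T then (g e true * wfac q e true + g e false * wfac q e false) else 1 := by
    intro e
    by_cases he : e ∈ T <;> simp [he, wfac_sum]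
  simp_rw [h2]
  rw [Fintype.prod_extend_by_one]

lemma expect_one (q : ℕ → ℝ) {n : ℕ} :
    ∑ f : Sym2 (Fin n) → Bool, weight q f = 1 := by
  have := expect_prod q (∅ : Finset (Sym2 (Fin n))) (fun _ _ => 1)
  simpa using this

/-- expectation of the indicator that all edges in T are absent -/
lemma expect_chi (q : ℕ → ℝ) {n : ℕ} (T : Finset (Sym2 (Fin n)))
    (hT : ∀ e ∈ T, ¬ e.IsDiag) :
    ∑ f : Sym2 (Fin n) → Bool, (∏ e ∈ T, (if f e then (0:ℝ) else 1)) * weight q f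
      = ∏ e ∈ T, (1 - edgeProb q e) := by
  rw [expect_prod q T (fun _ b => if b then (0:ℝ) else 1)]
  refine Finset.prod_congr rfl fun e he => ?_
  simp [wfac, hT e he]

-- ## probEvent basics

noncomputable def chi (b : Bool) : ℝ := if b then 0 else 1

lemma chi_nonneg (b : Bool) : 0 ≤ chi b := by unfold chi; split <;> norm_num

lemma chi_le_one (b : Bool) : chi b ≤ 1 := by unfold chi; split <;> norm_num

lemma prod_chi_nonneg {n : ℕ} (T : Finset (Sym2 (Fin n))) (f : Sym2 (Fin n) → Bool) :
    0 ≤ ∏ e ∈ T, chi (f e) :=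
  Finset.prod_nonneg fun e _ => chi_nonneg (f e)

lemma prod_chi_le_one {n : ℕ} (T : Finset (Sym2 (Fin n))) (f : Sym2 (Fin n) → Bool) :
    ∏ e ∈ T, chi (f e) ≤ 1 :=
  Finset.prod_le_one (fun e _ => chi_nonneg (f e)) (fun e _ => chi_le_one (f e))

lemma edgeProb_bounds {q : ℕ → ℝ} (hq : ∀ l, 1 ≤ l → 0 ≤ q l ∧ q l ≤ 1) {n : ℕ}
    (e : Sym2 (Fin n)) (he : ¬ e.IsDiag) : 0 ≤ edgeProb q e ∧ edgeProb q e ≤ 1 := by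
  induction e using Sym2.inductionOn with
  | hf i j =>
    rw [Sym2.mk_isDiag_iff] at he
    have hij : i.val ≠ j.val := fun h => he (Fin.ext h)
    have : 1 ≤ Nat.dist i.val j.val := Nat.one_le_iff_ne_zero.2
      (fun h0 => hij (Nat.eq_of_dist_eq_zero h0))
    exact hq _ this

lemma wfac_nonneg {q : ℕ → ℝ} (hq : ∀ l, 1 ≤ l → 0 ≤ q l ∧ q l ≤ 1) {n : ℕ}
    (e : Sym2 (Fin n)) (b : Bool) : 0 ≤ wfac q e b := by
  unfold wfac
  by_cases hd : e.IsDiag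
  · simp only [hd, if_true]; split <;> norm_num
  · obtain ⟨h0, h1⟩ := edgeProb_bounds hq e hd
    simp only [hd, if_false]; split <;> linarith

lemma weight_nonneg {q : ℕ → ℝ} (hq : ∀ l, 1 ≤ l → 0 ≤ q l ∧ q l ≤ 1) {n : ℕ}
    (f : Sym2 (Fin n) → Bool) : 0 ≤ weight q f := by
  rw [weight_eq_prod_wfac]
  exact Finset.prod_nonneg fun e _ => wfac_nonneg hq e (f e)

lemma probEvent_add_compl (q : ℕ → ℝ) (n : ℕ) (E : SimpleGraph (Fin n) → Prop) :
    probEvent q n E + probEvent q n (fun G => ¬ E G) = 1 := by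
  classical
  rw [probEvent, probEvent, ← Finset.sum_add_distrib, ← expect_one q (n := n)]
  refine Finset.sum_congr rfl fun f _ => ?_
  by_cases h : E (graphOf f) <;> simp [h]

lemma probEvent_nonneg {q : ℕ → ℝ} (hq : ∀ l, 1 ≤ l → 0 ≤ q l ∧ q l ≤ 1) (n : ℕ)
    (E : SimpleGraph (Fin n) → Prop) : 0 ≤ probEvent q n E := by
  refine Finset.sum_nonneg fun f _ => ?_
  split
  · exact weight_nonneg hq f
  · exact le_refl 0

lemma probEvent_le_one {q : ℕ → ℝ} (hq : ∀ l, 1 ≤ l → 0 ≤ q l ∧ q l ≤ 1) (n : ℕ)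
    (E : SimpleGraph (Fin n) → Prop) : probEvent q n E ≤ 1 := by
  have := probEvent_add_compl q n E
  have h2 := probEvent_nonneg hq n (fun G => ¬ E G)
  linarith

/-- monotone bound by a pointwise dominating function -/
lemma probEvent_le_expect {q : ℕ → ℝ} (hq : ∀ l, 1 ≤ l → 0 ≤ q l ∧ q l ≤ 1) (n : ℕ)
    (E : SimpleGraph (Fin n) → Prop) (G : (Sym2 (Fin n) → Bool) → ℝ)
    (hG0 : ∀ f, 0 ≤ G f) (hG1 : ∀ f, E (graphOf f) → 1 ≤ G f) :
    probEvent q n E ≤ ∑ f : Sym2 (Fin n) → Bool, G f * weight q f := by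
  refine Finset.sum_le_sum fun f _ => ?_
  split
  · next h =>
      nlinarith [weight_nonneg hq f, hG1 f h]
  · exact mul_nonneg (hG0 f) (weight_nonneg hq f)

-- ## block independence

lemma expect_blocks (q : ℕ → ℝ) {n : ℕ} {α : Type*} [DecidableEq α] (V : Finset α)
    (T : α → Finset (Sym2 (Fin n))) :
    ∀ T₀ : Finset (Sym2 (Fin n)), (∀ e ∈ T₀, ¬ e.IsDiag) →
    (∀ v ∈ V, ∀ e ∈ T v, ¬ e.IsDiag) →
    (∀ v ∈ V, Disjoint T₀ (T v)) →
    (∀ v ∈ V, ∀ u ∈ V, v ≠ u → Disjoint (T v) (T u)) →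
    ∑ f : Sym2 (Fin n) → Bool,
        ((∏ e ∈ T₀, chi (f e)) * ∏ v ∈ V, (1 - ∏ e ∈ T v, chi (f e))) * weight q f
      = (∏ e ∈ T₀, (1 - edgeProb q e)) * ∏ v ∈ V, (1 - ∏ e ∈ T v, (1 - edgeProb q e)) := by
  classical
  induction V using Finset.induction_on with
  | empty =>
      intro T₀ h₀ _ _ _
      simpa [chi] using expect_chi q T₀ h₀
  | @insert a s ha IH =>
      intro T₀ h₀ hnd hdis hpair
      have hTa : ∀ e ∈ T a, ¬ e.IsDiag := hnd a (Finset.mem_insert_self a s)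
      have hd0a : Disjoint T₀ (T a) := hdis a (Finset.mem_insert_self a s)
      have key : ∀ f : Sym2 (Fin n) → Bool,
          ((∏ e ∈ T₀, chi (f e)) * ∏ v ∈ insert a s, (1 - ∏ e ∈ T v, chi (f e))) * weight q f
          = ((∏ e ∈ T₀, chi (f e)) * ∏ v ∈ s, (1 - ∏ e ∈ T v, chi (f e))) * weight q f
            - ((∏ e ∈ T₀ ∪ T a, chi (f e)) * ∏ v ∈ s, (1 - ∏ e ∈ T v, chi (f e))) * weight q f := by
        intro f
        rw [Finset.prod_insert ha, Finset.prod_union hd0a]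
        ring
      simp_rw [key]
      rw [Finset.sum_sub_distrib]
      have IH1 := IH T₀ h₀ (fun v hv => hnd v (Finset.mem_insert_of_mem hv))
        (fun v hv => hdis v (Finset.mem_insert_of_mem hv))
        (fun v hv u hu hvu => hpair v (Finset.mem_insert_of_mem hv) u (Finset.mem_insert_of_mem hu) hvu)
      have IH2 := IH (T₀ ∪ T a)
        (by
          intro e he
          rcases Finset.mem_union.1 he with h | h
          · exact h₀ e h
          · exact hTa e h)
        (fun v hv => hnd v (Finset.mem_insert_of_mem hv))
        (by
          intro v hv
          refine Finset.disjoint_union_left.2 ⟨hdis v (Finset.mem_insert_of_mem hv), ?_⟩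
          exact hpair a (Finset.mem_insert_self a s) v (Finset.mem_insert_of_mem hv)
            (fun h => ha (h ▸ hv))
        )
        (fun v hv u hu hvu => hpair v (Finset.mem_insert_of_mem hv) u (Finset.mem_insert_of_mem hu) hvu)
      rw [IH1, IH2, Finset.prod_insert ha, Finset.prod_union hd0a]
      ring

-- ## upper bound (union bound)

lemma prod_subset_le_prod {ι : Type*} [DecidableEq ι] {S T : Finset ι} (h : S ⊆ T) (f : ι → ℝ)
    (h0 : ∀ e ∈ T, 0 ≤ f e) (h1 : ∀ e ∈ T, f e ≤ 1) : ∏ e ∈ T, f e ≤ ∏ e ∈ S, f e := by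
  rw [← Finset.prod_sdiff h]
  have hS : (0:ℝ) ≤ ∏ e ∈ S, f e := Finset.prod_nonneg fun e he => h0 e (h he)
  have hT : ∏ e ∈ T \ S, f e ≤ 1 :=
    Finset.prod_le_one (fun e he => h0 e (Finset.mem_sdiff.1 he).1)
      (fun e he => h1 e (Finset.mem_sdiff.1 he).1)
  have hT0 : (0:ℝ) ≤ ∏ e ∈ T \ S, f e :=
    Finset.prod_nonneg fun e he => h0 e (Finset.mem_sdiff.1 he).1
  nlinarith

/-- the set of non-diagonal edges at a vertex -/
noncomputable def star {n : ℕ} (i : Fin n) : Finset (Sym2 (Fin n)) :=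
  Finset.univ.filter (fun e => i ∈ e ∧ ¬ e.IsDiag)

lemma union_bound {q : ℕ → ℝ} (hq : ∀ l, 1 ≤ l → 0 ≤ q l ∧ q l ≤ 1) (n : ℕ) :
    probEvent q n (fun G => ∃ x : Fin n, ∀ y : Fin n, ¬ G.Adj x y)
      ≤ ∑ i : Fin n, ∏ e ∈ star i, (1 - edgeProb q e) := by
  classical
  have step1 : probEvent q n (fun G => ∃ x : Fin n, ∀ y : Fin n, ¬ G.Adj x y)
      ≤ ∑ f : Sym2 (Fin n) → Bool, (∑ i : Fin n, ∏ e ∈ star i, chi (f e)) * weight q f := by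
    refine probEvent_le_expect hq n _ _ (fun f => Finset.sum_nonneg fun i _ => prod_chi_nonneg _ f) ?_
    rintro f ⟨x, hx⟩
    have hterm : ∏ e ∈ star x, chi (f e) = 1 := by
      refine Finset.prod_eq_one fun e he => ?_
      obtain ⟨hxe, hnd⟩ := (Finset.mem_filter.1 he).2
      obtain ⟨j, rfl⟩ := Sym2.mem_iff_exists.1 hxe
      have hxj : x ≠ j := by
        intro h; exact hnd (by rw [Sym2.mk_isDiag_iff]; exact h)
      have : ¬ (graphOf f).Adj x j := hx j
      have hfe : f s(x, j) = false := by
        by_contra hf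
        exact this ⟨hxj, by simpa using (by simpa using hf : f s(x, j) = true)⟩
      simp [chi, hfe]
    calc (1:ℝ) = ∏ e ∈ star x, chi (f e) := hterm.symm
      _ ≤ ∑ i : Fin n, ∏ e ∈ star i, chi (f e) :=
          Finset.single_le_sum (fun i _ => prod_chi_nonneg _ f) (Finset.mem_univ x)
  refine step1.trans ?_
  simp_rw [Finset.sum_mul]
  rw [Finset.sum_comm]
  refine le_of_eq (Finset.sum_congr rfl fun i _ => ?_)
  unfold chi
  rw [expect_chi q (star i) (fun e he => (Finset.mem_filter.1 he).2.2)]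

lemma star_prod_le {q : ℕ → ℝ} (hq : ∀ l, 1 ≤ l → 0 ≤ q l ∧ q l ≤ 1) {n : ℕ} (hn : 1 ≤ n)
    (i : Fin (2*n)) :
    ∏ e ∈ star i, (1 - edgeProb q e) ≤ ∏ l ∈ Finset.Icc 1 n, (1 - q l) := by
  classical
  have hiLt := i.isLt
  set vtx : ℕ → Fin (2*n) := fun l =>
    if h : i.val < n then ⟨i.val + min l n, by omega⟩ else ⟨i.val - l, by omega⟩ with hvtx
  have hvtxval : ∀ l ∈ Finset.Icc 1 n, (vtx l).val = if i.val < n then i.val + l else i.val - l := by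
    intro l hl
    obtain ⟨h1, h2⟩ := Finset.mem_Icc.1 hl
    by_cases h : i.val < n <;> simp [hvtx, h, min_eq_left h2]
  have hdist : ∀ l ∈ Finset.Icc 1 n, Nat.dist i.val (vtx l).val = l := by
    intro l hl
    obtain ⟨h1, h2⟩ := Finset.mem_Icc.1 hl
    rw [hvtxval l hl]
    by_cases h : i.val < n <;> simp [h, Nat.dist] <;> omega
  have hne : ∀ l ∈ Finset.Icc 1 n, vtx l ≠ i := by
    intro l hl h
    have := hdist l hl
    rw [h] at this
    rw [Nat.dist_self] at this
    obtain ⟨h1, _⟩ := Finset.mem_Icc.1 hl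
    omega
  set S : Finset (Sym2 (Fin (2*n))) := (Finset.Icc 1 n).image (fun l => s(i, vtx l)) with hS
  have hsub : S ⊆ star i := by
    intro e he
    obtain ⟨l, hl, rfl⟩ := Finset.mem_image.1 he
    refine Finset.mem_filter.2 ⟨Finset.mem_univ _, Sym2.mem_mk_left _ _, ?_⟩
    rw [Sym2.mk_isDiag_iff]
    exact fun h => hne l hl h.symm
  have hinj : ∀ l ∈ Finset.Icc 1 n, ∀ l' ∈ Finset.Icc 1 n,
      s(i, vtx l) = s(i, vtx l') → l = l' := by
    intro l hl l' hl' h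
    have : Nat.dist i.val (vtx l).val = Nat.dist i.val (vtx l').val := by
      rcases Sym2.eq_iff.1 h with ⟨_, h2⟩ | ⟨h1, h2⟩
      · rw [h2]
      · exact absurd h2 (hne l hl)
    rw [hdist l hl, hdist l' hl'] at this
    exact this
  have hbounds : ∀ e ∈ star i, 0 ≤ 1 - edgeProb q e ∧ 1 - edgeProb q e ≤ 1 := by
    intro e he
    have hnd := (Finset.mem_filter.1 he).2.2
    obtain ⟨h0, h1⟩ := edgeProb_bounds hq e hnd
    constructor <;> linarith
  have step1 : ∏ e ∈ star i, (1 - edgeProb q e) ≤ ∏ e ∈ S, (1 - edgeProb q e) :=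
    prod_subset_le_prod hsub _ (fun e he => (hbounds e he).1) (fun e he => (hbounds e he).2)
  refine step1.trans (le_of_eq ?_)
  rw [hS, Finset.prod_image hinj]
  refine Finset.prod_congr rfl fun l hl => ?_
  rw [edgeProb_mk, hdist l hl]

lemma upper_bound {q : ℕ → ℝ} (hq : ∀ l, 1 ≤ l → 0 ≤ q l ∧ q l ≤ 1) {n : ℕ} (hn : 1 ≤ n) :
    probEvent q (2*n) (fun G => ∃ x, ∀ y, ¬ G.Adj x y)
      ≤ (2*n : ℝ) * Real.exp (-(∑ l ∈ Finset.Icc 1 n, q l)) := by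
  refine (union_bound hq (2*n)).trans ?_
  have h1 : ∀ i : Fin (2*n), ∏ e ∈ star i, (1 - edgeProb q e)
      ≤ Real.exp (-(∑ l ∈ Finset.Icc 1 n, q l)) := by
    intro i
    refine (star_prod_le hq hn i).trans ?_
    rw [← Finset.sum_neg_distrib, Real.exp_sum]
    refine Finset.prod_le_prod (fun l hl => ?_) (fun l hl => ?_)
    · have := hq l (Finset.mem_Icc.1 hl).1; linarith
    · have := Real.add_one_le_exp (-(q l)); linarith
  calc ∑ i : Fin (2*n), ∏ e ∈ star i, (1 - edgeProb q e)
      ≤ ∑ _i : Fin (2*n), Real.exp (-(∑ l ∈ Finset.Icc 1 n, q l)) :=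
        Finset.sum_le_sum fun i _ => h1 i
    _ = (2*n : ℝ) * Real.exp (-(∑ l ∈ Finset.Icc 1 n, q l)) := by
        rw [Finset.sum_const, Finset.card_univ, Fintype.card_fin]; push_cast; ring

-- ## lower bound

noncomputable def sdist {n : ℕ} (e : Sym2 (Fin n)) : ℕ :=
  Sym2.lift ⟨fun i j => Nat.dist i.val j.val, fun i j => Nat.dist_comm _ _⟩ e

lemma sdist_mk {n : ℕ} (i j : Fin n) : sdist s(i, j) = Nat.dist i.val j.val := rfl

lemma edgeProb_eq_sdist (q : ℕ → ℝ) {n : ℕ} (e : Sym2 (Fin n)) :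
    edgeProb q e = q (sdist e) := by
  induction e using Sym2.inductionOn with
  | hf i j => rfl

lemma sdist_lt {n : ℕ} (e : Sym2 (Fin n)) : sdist e < n := by
  induction e using Sym2.inductionOn with
  | hf i j =>
    have h1 := i.isLt
    have h2 := j.isLt
    rw [sdist_mk]
    unfold Nat.dist
    omega

lemma sdist_pos {n : ℕ} (e : Sym2 (Fin n)) (h : ¬ e.IsDiag) : 1 ≤ sdist e := by
  induction e using Sym2.inductionOn with
  | hf i j =>
    rw [Sym2.mk_isDiag_iff] at h
    rw [sdist_mk]
    unfold Nat.dist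
    have : i.val ≠ j.val := fun hh => h (Fin.ext hh)
    omega

lemma expect_edge (q : ℕ → ℝ) {n : ℕ} (e₀ : Sym2 (Fin n)) (h : ¬ e₀.IsDiag) :
    ∑ f : Sym2 (Fin n) → Bool, (if f e₀ then (1:ℝ) else 0) * weight q f
      = edgeProb q e₀ := by
  have := expect_prod q {e₀} (fun _ b => if b then (1:ℝ) else 0)
  simpa [wfac, h] using this

lemma lower_bound {q : ℕ → ℝ} (hq : ∀ l, 1 ≤ l → 0 ≤ q l ∧ q l ≤ 1) {B m : ℕ} (hB : 1 ≤ B)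
    {μ : ℝ} (hμ0 : 0 < μ) (hμ1 : μ ≤ 1)
    (hμ : ∀ l, 1 ≤ l → l ≤ B → μ ≤ 1 - q l)
    (hzero : ∀ l, B < l → l < m * (2*B+1) → q l = 0) :
    probEvent q (m * (2*B+1)) (fun G => ¬ ∃ x, ∀ y, ¬ G.Adj x y)
      ≤ (1 - μ^(2*B))^m := by
  classical
  set c := m * (2*B+1) with hc
  have hιlt : ∀ t : Fin m, t.val * (2*B+1) < c := by
    intro t
    exact mul_lt_mul_of_pos_right t.isLt (by omega)
  set ι : Fin m → Fin c := fun t => ⟨t.val * (2*B+1), hιlt t⟩ with hι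
  have hιinj : Function.Injective ι := by
    intro t t' h
    have : t.val * (2*B+1) = t'.val * (2*B+1) := congrArg Fin.val h
    exact Fin.ext (Nat.eq_of_mul_eq_mul_right (by omega) this)
  set V : Finset (Fin c) := Finset.univ.image ι with hV
  have hVcard : V.card = m := by
    rw [hV, Finset.card_image_of_injective _ hιinj, Finset.card_univ, Fintype.card_fin]
  set Tv : Fin c → Finset (Sym2 (Fin c)) :=
    fun v => Finset.univ.filter (fun e => ¬ e.IsDiag ∧ v ∈ e ∧ sdist e ≤ B) with hTv
  set Z : Finset (Sym2 (Fin c)) :=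
    Finset.univ.filter (fun e => ¬ e.IsDiag ∧ B < sdist e) with hZ
  -- pairwise disjointness
  have hpair : ∀ v ∈ V, ∀ u ∈ V, v ≠ u → Disjoint (Tv v) (Tv u) := by
    intro v hv u hu hvu
    rw [Finset.disjoint_left]
    intro e hev heu
    obtain ⟨hnd, hve, hdv⟩ := (Finset.mem_filter.1 hev).2
    obtain ⟨-, hue, -⟩ := (Finset.mem_filter.1 heu).2
    have he : e = s(v, u) := (Sym2.mem_and_mem_iff hvu).1 ⟨hve, hue⟩
    obtain ⟨t, -, rfl⟩ := Finset.mem_image.1 hv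
    obtain ⟨t', -, rfl⟩ := Finset.mem_image.1 hu
    have htt' : t.val ≠ t'.val := fun h => hvu (congrArg ι (Fin.ext h))
    have hdist : sdist e = Nat.dist t.val t'.val * (2*B+1) := by
      rw [he, sdist_mk]
      show Nat.dist (t.val * (2*B+1)) (t'.val * (2*B+1)) = _
      exact Nat.dist_mul_right _ _ _
    have : 1 ≤ Nat.dist t.val t'.val := by
      unfold Nat.dist; omega
    rw [hdist] at hdv
    nlinarith
  have hTnd : ∀ v ∈ V, ∀ e ∈ Tv v, ¬ e.IsDiag := by
    intro v _ e he; exact (Finset.mem_filter.1 he).2.1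
  -- dominating function
  set G : (Sym2 (Fin c) → Bool) → ℝ := fun f =>
    (∏ v ∈ V, (1 - ∏ e ∈ Tv v, chi (f e))) + ∑ e ∈ Z, (if f e then (1:ℝ) else 0) with hG
  have hfac01 : ∀ f : Sym2 (Fin c) → Bool, ∀ v : Fin c,
      0 ≤ 1 - ∏ e ∈ Tv v, chi (f e) ∧ 1 - ∏ e ∈ Tv v, chi (f e) ≤ 1 := by
    intro f v
    have h1 := prod_chi_le_one (Tv v) f
    have h0 := prod_chi_nonneg (Tv v) f
    constructor <;> linarith
  have hG0 : ∀ f, 0 ≤ G f := by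
    intro f
    have h1 : 0 ≤ ∏ v ∈ V, (1 - ∏ e ∈ Tv v, chi (f e)) :=
      Finset.prod_nonneg fun v _ => (hfac01 f v).1
    have h2 : 0 ≤ ∑ e ∈ Z, (if f e then (1:ℝ) else 0) :=
      Finset.sum_nonneg fun e _ => by split <;> norm_num
    rw [hG]; positivity
  have hG1 : ∀ f, (¬ ∃ x, ∀ y, ¬ (graphOf f).Adj x y) → 1 ≤ G f := by
    intro f hno
    push_neg at hno
    by_cases hall : ∀ v ∈ V, ∏ e ∈ Tv v, chi (f e) = 0
    · have h1 : ∏ v ∈ V, (1 - ∏ e ∈ Tv v, chi (f e)) = 1 :=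
        Finset.prod_eq_one fun v hv => by rw [hall v hv]; ring
      have h2 : 0 ≤ ∑ e ∈ Z, (if f e then (1:ℝ) else 0) :=
        Finset.sum_nonneg fun e _ => by split <;> norm_num
      rw [hG]; simp only []; linarith
    · push_neg at hall
      obtain ⟨v, hv, hP⟩ := hall
      have hfalse : ∀ e ∈ Tv v, f e = false := by
        intro e he
        have := (Finset.prod_ne_zero_iff.1 hP) e he
        unfold chi at this
        by_contra hfe
        rw [Bool.not_eq_false] at hfe
        rw [hfe] at this
        simp at this
      obtain ⟨j, hj⟩ := hno v
      obtain ⟨hvj, hfj⟩ := hj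
      set e₀ : Sym2 (Fin c) := s(v, j) with he₀
      have hnd : ¬ e₀.IsDiag := by rw [he₀, Sym2.mk_isDiag_iff]; exact hvj
      have hsd : B < sdist e₀ := by
        by_contra hle
        push_neg at hle
        have : e₀ ∈ Tv v := Finset.mem_filter.2 ⟨Finset.mem_univ _,
          hnd, Sym2.mem_mk_left _ _, hle⟩
        have := hfalse e₀ this
        rw [this] at hfj
        exact Bool.false_ne_true (by simpa using hfj)
      have hZe : e₀ ∈ Z := Finset.mem_filter.2 ⟨Finset.mem_univ _, hnd, hsd⟩
      have h2 : 1 ≤ ∑ e ∈ Z, (if f e then (1:ℝ) else 0) := by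
        calc (1:ℝ) = if f e₀ then (1:ℝ) else 0 := by simp [hfj]
          _ ≤ ∑ e ∈ Z, (if f e then (1:ℝ) else 0) :=
            Finset.single_le_sum (f := fun e => if f e then (1:ℝ) else 0)
              (fun e _ => by split <;> norm_num) hZe
      have h1 : 0 ≤ ∏ v ∈ V, (1 - ∏ e ∈ Tv v, chi (f e)) :=
        Finset.prod_nonneg fun v _ => (hfac01 f v).1
      rw [hG]; simp only []; linarith
  -- apply the expectation bound
  have hmain := probEvent_le_expect hq c
    (fun G => ¬ ∃ x, ∀ y, ¬ G.Adj x y) G hG0 hG1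
  refine hmain.trans ?_
  -- compute the expectation
  have hsplit : ∑ f : Sym2 (Fin c) → Bool, G f * weight q f
      = (∑ f : Sym2 (Fin c) → Bool,
          ((∏ e ∈ (∅ : Finset (Sym2 (Fin c))), chi (f e)) *
            ∏ v ∈ V, (1 - ∏ e ∈ Tv v, chi (f e))) * weight q f)
        + ∑ e ∈ Z, ∑ f : Sym2 (Fin c) → Bool, (if f e then (1:ℝ) else 0) * weight q f := by
    have hpt : ∀ f : Sym2 (Fin c) → Bool, G f * weight q f
        = ((∏ e ∈ (∅ : Finset (Sym2 (Fin c))), chi (f e)) *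
            ∏ v ∈ V, (1 - ∏ e ∈ Tv v, chi (f e))) * weight q f
          + ∑ e ∈ Z, (if f e then (1:ℝ) else 0) * weight q f := by
      intro f
      rw [hG]
      simp only [Finset.prod_empty, one_mul]
      rw [add_mul, Finset.sum_mul]
    calc ∑ f : Sym2 (Fin c) → Bool, G f * weight q f
        = ∑ f : Sym2 (Fin c) → Bool,
            (((∏ e ∈ (∅ : Finset (Sym2 (Fin c))), chi (f e)) *
              ∏ v ∈ V, (1 - ∏ e ∈ Tv v, chi (f e))) * weight q f
            + ∑ e ∈ Z, (if f e then (1:ℝ) else 0) * weight q f) :=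
          Finset.sum_congr rfl fun f _ => hpt f
      _ = _ := by
          rw [Finset.sum_add_distrib, Finset.sum_comm]
  rw [hsplit]
  have hE1 := expect_blocks q V Tv ∅ (by simp) hTnd (fun v _ => Finset.disjoint_empty_left _) hpair
  rw [hE1]
  have hE2 : ∑ e ∈ Z, ∑ f : Sym2 (Fin c) → Bool, (if f e then (1:ℝ) else 0) * weight q f = 0 := by
    refine Finset.sum_eq_zero fun e he => ?_
    obtain ⟨hnd, hgt⟩ := (Finset.mem_filter.1 he).2
    rw [expect_edge q e hnd, edgeProb_eq_sdist]
    exact hzero _ hgt (sdist_lt e)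
  rw [hE2, add_zero, Finset.prod_empty, one_mul]
  -- final estimate
  have hΔ : ∀ v ∈ V, μ^(2*B) ≤ ∏ e ∈ Tv v, (1 - edgeProb q e) := by
    intro v hv
    -- card bound
    have hJ : (Tv v).card ≤ 2*B := by
      set Jv : Finset (Fin c) :=
        Finset.univ.filter (fun j => j ≠ v ∧ Nat.dist v.val j.val ≤ B) with hJv
      have h1 : (Tv v).card ≤ Jv.card := by
        refine Finset.card_le_card_of_injOn
          (fun e => if h : v ∈ e then Sym2.Mem.other' h else v) ?_ ?_
        · intro e he
          obtain ⟨hnd, hve, hd⟩ := (Finset.mem_filter.1 he).2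
          dsimp only
          rw [dif_pos hve]
          refine Finset.mem_filter.2 ⟨Finset.mem_univ _, ?_, ?_⟩
          · intro hh
            apply hnd
            have := Sym2.other_spec' hve
            rw [← this, hh, Sym2.mk_isDiag_iff]
          · have hspec := Sym2.other_spec' hve
            have : sdist e = Nat.dist v.val (Sym2.Mem.other' hve).val := by
              rw [← sdist_mk v (Sym2.Mem.other' hve)]
              exact congrArg sdist hspec.symm
            omega
        · intro e he e' he' hee
          obtain ⟨-, hve, -⟩ := (Finset.mem_filter.1 he).2
          obtain ⟨-, hve', -⟩ := (Finset.mem_filter.1 he').2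
          dsimp only at hee
          rw [dif_pos hve, dif_pos hve'] at hee
          have h1 := Sym2.other_spec' hve
          have h2 := Sym2.other_spec' hve'
          rw [← h1, ← h2, hee]
      have h2 : Jv.card ≤ 2*B := by
        have := Finset.card_le_card_of_injOn
          (f := fun j : Fin c => (Nat.dist v.val j.val, decide (v.val < j.val)))
          (s := Jv) (t := (Finset.Icc 1 B) ×ˢ (Finset.univ : Finset Bool)) ?_ ?_
        · refine this.trans ?_
          rw [Finset.card_product, Nat.card_Icc, Finset.card_univ]
          simp
          omega
        · intro j hj
          obtain ⟨hjv, hd⟩ := (Finset.mem_filter.1 hj).2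
          refine Finset.mem_product.2 ⟨Finset.mem_Icc.2 ⟨?_, hd⟩, Finset.mem_univ _⟩
          exact Nat.one_le_iff_ne_zero.2
            (fun h0 => hjv (Fin.ext (Nat.eq_of_dist_eq_zero h0)).symm)
        · intro j hj j' hj' hjj
          have h1 : Nat.dist v.val j.val = Nat.dist v.val j'.val := congrArg Prod.fst hjj
          have h2 : decide (v.val < j.val) = decide (v.val < j'.val) := congrArg Prod.snd hjj
          rw [decide_eq_decide] at h2
          refine Fin.ext ?_
          unfold Nat.dist at h1
          omega
      exact h1.trans h2
    have hfactor : ∀ e ∈ Tv v, μ ≤ 1 - edgeProb q e := by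
      intro e he
      obtain ⟨hnd, -, hd⟩ := (Finset.mem_filter.1 he).2
      rw [edgeProb_eq_sdist]
      exact hμ _ (sdist_pos e hnd) hd
    calc μ^(2*B) ≤ μ^((Tv v).card) := pow_le_pow_of_le_one hμ0.le hμ1 hJ
      _ = ∏ _e ∈ Tv v, μ := (Finset.prod_const μ).symm
      _ ≤ ∏ e ∈ Tv v, (1 - edgeProb q e) :=
          Finset.prod_le_prod (fun e _ => hμ0.le) hfactor
  have hfac : ∀ v ∈ V, (1 - ∏ e ∈ Tv v, (1 - edgeProb q e)) ≤ 1 - μ^(2*B) := by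
    intro v hv
    have := hΔ v hv
    linarith
  have hfacnn : ∀ v ∈ V, 0 ≤ 1 - ∏ e ∈ Tv v, (1 - edgeProb q e) := by
    intro v hv
    have h1 : ∏ e ∈ Tv v, (1 - edgeProb q e) ≤ 1 := by
      refine Finset.prod_le_one (fun e he => ?_) (fun e he => ?_)
      · have := edgeProb_bounds hq e ((Finset.mem_filter.1 he).2.1); linarith [this.2]
      · have := edgeProb_bounds hq e ((Finset.mem_filter.1 he).2.1); linarith [this.1]
    linarith
  calc ∏ v ∈ V, (1 - ∏ e ∈ Tv v, (1 - edgeProb q e))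
      ≤ ∏ v ∈ V, (1 - μ^(2*B)) := Finset.prod_le_prod hfacnn hfac
    _ = (1 - μ^(2*B))^m := by rw [Finset.prod_const, hVcard]

-- ## limsup helper

lemma limsup_eq_one_of_freq (u : ℕ → ℝ) (h1 : ∀ n, u n ≤ 1)
    (hfreq : ∀ k : ℕ, ∃ n, k ≤ n ∧ 1 - 1/(k+1) ≤ u n) : limsup u atTop = 1 := by
  have hbdd : IsBoundedUnder (· ≤ ·) atTop u := isBoundedUnder_of ⟨1, h1⟩
  have hcob : IsCoboundedUnder (· ≤ ·) atTop u := by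
    refine IsCoboundedUnder.of_frequently_ge (a := 0) ?_
    rw [frequently_atTop]
    intro m
    obtain ⟨n, hn, hun⟩ := hfreq m
    refine ⟨n, hn, le_trans ?_ hun⟩
    have h2 : (1:ℝ)/(m+1) ≤ 1 := by
      rw [div_le_one (by positivity)]
      have : (0:ℝ) ≤ m := Nat.cast_nonneg m
      linarith
    linarith
  refine le_antisymm (limsup_le_of_le hcob (Eventually.of_forall h1)) ?_
  have hk : ∀ k : ℕ, 1 - 1/(k+1) ≤ limsup u atTop := by
    intro k
    refine le_limsup_of_frequently_le ?_ hbdd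
    rw [frequently_atTop]
    intro m
    obtain ⟨n, hn, hun⟩ := hfreq (max m k)
    refine ⟨n, le_trans (le_max_left _ _) hn, le_trans ?_ hun⟩
    have hmk : (k:ℝ) ≤ ((max m k : ℕ) : ℝ) := Nat.cast_le.2 (le_max_right m k)
    have h2 : (1:ℝ)/((max m k : ℕ) + 1) ≤ 1/(k+1) :=
      one_div_le_one_div_of_le (by positivity) (by linarith)
    linarith
  by_contra hlt
  push_neg at hlt
  obtain ⟨k, hk'⟩ := exists_nat_one_div_lt (sub_pos.2 hlt)
  have := hk k
  linarith

lemma step_odd (p : ℕ → ℝ) (ε : ℝ) (hε : 0 < ε)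
    (hub : ∀ m : ℕ, ∃ n : ℕ, m ≤ n ∧ (n : ℝ) ^ ε ≤ ∑ l ∈ Finset.Icc 1 n, p l)
    (k c : ℕ) :
    ∃ n : ℕ, n > c ∧
      (2*n:ℝ) * Real.exp (-((∑ l ∈ Finset.Icc 1 n, p l) - c)) ≤ 1/(k+1) := by
  set C : ℝ := c + Real.log 2 + Real.log (k+1) with hC
  have h1 : ∀ᶠ x : ℝ in atTop, Real.log x + C ≤ x ^ ε := by
    have hlo := (isLittleO_log_rpow_atTop hε).bound (by norm_num : (0:ℝ) < 1/2)
    have hto : ∀ᶠ x : ℝ in atTop, 2 * C ≤ x ^ ε :=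
      (tendsto_rpow_atTop hε).eventually_ge_atTop (2*C)
    have hge1 : ∀ᶠ x : ℝ in atTop, (1:ℝ) ≤ x := eventually_ge_atTop 1
    filter_upwards [hlo, hto, hge1] with x hx1 hx2 hx3
    have hxε : 0 ≤ x ^ ε := Real.rpow_nonneg (by linarith) ε
    rw [Real.norm_eq_abs, Real.norm_eq_abs, abs_of_nonneg hxε] at hx1
    have h2 : Real.log x ≤ 1/2 * x^ε := le_trans (le_abs_self _) hx1
    linarith
  obtain ⟨x₀, hx₀⟩ := eventually_atTop.1 h1
  obtain ⟨n, hn1, hn2⟩ := hub (max (Nat.ceil x₀) (c+1))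
  have hnc : c + 1 ≤ n := le_trans (le_max_right _ _) hn1
  refine ⟨n, by omega, ?_⟩
  have hnx : x₀ ≤ (n:ℝ) :=
    le_trans (Nat.le_ceil x₀) (Nat.cast_le.2 (le_trans (le_max_left _ _) hn1))
  have hsum : Real.log n + C ≤ ∑ l ∈ Finset.Icc 1 n, p l := le_trans (hx₀ n hnx) hn2
  have hn0 : (0:ℝ) < n := Nat.cast_pos.2 (by omega)
  have hk0 : (0:ℝ) < (k:ℝ)+1 := by positivity
  have hexp : Real.exp (-((∑ l ∈ Finset.Icc 1 n, p l) - c))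
      ≤ Real.exp (-(Real.log n + Real.log 2 + Real.log (k+1))) := by
    apply Real.exp_le_exp.2
    rw [hC] at hsum
    linarith
  have heq : Real.exp (-(Real.log n + Real.log 2 + Real.log (k+1)))
      = 1/((n:ℝ)*2*((k:ℝ)+1)) := by
    rw [Real.exp_neg, Real.exp_add, Real.exp_add, Real.exp_log hn0,
      Real.exp_log (by norm_num : (0:ℝ) < 2), Real.exp_log hk0]
    rw [one_div]
  calc (2*n:ℝ) * Real.exp (-((∑ l ∈ Finset.Icc 1 n, p l) - c))
      ≤ (2*n:ℝ) * (1/((n:ℝ)*2*((k:ℝ)+1))) := by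
        apply mul_le_mul_of_nonneg_left (le_of_le_of_eq hexp heq) (by positivity)
    _ = 1/((k:ℝ)+1) := by
        rw [mul_one_div, div_eq_div_iff (by positivity : ((n:ℝ)*2*((k:ℝ)+1)) ≠ 0) (ne_of_gt hk0)]
        ring
  
lemma step_even (r : ℝ) (h0 : 0 ≤ r) (h1 : r < 1) (k : ℕ) :
    ∃ m : ℕ, 1 ≤ m ∧ r^m ≤ 1/((k:ℝ)+1) := by
  have ht := tendsto_pow_atTop_nhds_zero_of_lt_one h0 h1
  have hev : ∀ᶠ m : ℕ in atTop, r^m < 1/((k:ℝ)+1) :=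
    ht.eventually_lt_const (by positivity)
  obtain ⟨a, ha⟩ := eventually_atTop.1 hev
  exact ⟨max a 1, le_max_right _ _, (ha _ (le_max_left _ _)).le⟩

-- ## construction

noncomputable def rmu (p : ℕ → ℝ) (B : ℕ) : ℝ :=
  1 - (∏ l ∈ Finset.Icc 1 B, (1 - p l))^(2*B)

lemma mu_pos (p : ℕ → ℝ) (hp : ∀ l, 1 ≤ l → 0 ≤ p l ∧ p l < 1) (B : ℕ) :
    0 < ∏ l ∈ Finset.Icc 1 B, (1 - p l) :=
  Finset.prod_pos fun l hl => by
    have := (hp l (Finset.mem_Icc.1 hl).1).2; linarith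

lemma mu_le_one (p : ℕ → ℝ) (hp : ∀ l, 1 ≤ l → 0 ≤ p l ∧ p l < 1) (B : ℕ) :
    ∏ l ∈ Finset.Icc 1 B, (1 - p l) ≤ 1 :=
  Finset.prod_le_one
    (fun l hl => by have := (hp l (Finset.mem_Icc.1 hl).1).2; linarith)
    (fun l hl => by have := (hp l (Finset.mem_Icc.1 hl).1).1; linarith)

lemma rmu_mem (p : ℕ → ℝ) (hp : ∀ l, 1 ≤ l → 0 ≤ p l ∧ p l < 1) (B : ℕ) :
    0 ≤ rmu p B ∧ rmu p B < 1 := by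
  have h0 := mu_pos p hp B
  have h1 := mu_le_one p hp B
  constructor
  · have := pow_le_one₀ h0.le h1 (n := 2*B)
    unfold rmu; linarith
  · have := pow_pos h0 (2*B)
    unfold rmu; linarith

noncomputable def FF (p : ℕ → ℝ) (hp : ∀ l, 1 ≤ l → 0 ≤ p l ∧ p l < 1) (ε : ℝ) (hε : 0 < ε)
    (hub : ∀ m : ℕ, ∃ n : ℕ, m ≤ n ∧ (n : ℝ) ^ ε ≤ ∑ l ∈ Finset.Icc 1 n, p l) :
    ℕ → ℕ × ℕ
  | 0 => (0, 1)
  | (j+1) =>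
    let c := (FF p hp ε hε hub j).1
    let n := (step_odd p ε hε hub (j+1) c).choose
    ((step_even (rmu p (2*n)) (rmu_mem p hp (2*n)).1 (rmu_mem p hp (2*n)).2 (j+1)).choose
      * (2*(2*n)+1), n)

lemma FF_spec (p : ℕ → ℝ) (hp : ∀ l, 1 ≤ l → 0 ≤ p l ∧ p l < 1) (ε : ℝ) (hε : 0 < ε)
    (hub : ∀ m : ℕ, ∃ n : ℕ, m ≤ n ∧ (n : ℝ) ^ ε ≤ ∑ l ∈ Finset.Icc 1 n, p l) (j : ℕ) :
    (FF p hp ε hε hub (j+1)).2 > (FF p hp ε hε hub j).1 ∧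
    (2*((FF p hp ε hε hub (j+1)).2):ℝ) *
      Real.exp (-((∑ l ∈ Finset.Icc 1 ((FF p hp ε hε hub (j+1)).2), p l)
        - ((FF p hp ε hε hub j).1))) ≤ 1/((j+1:ℕ)+1) ∧
    ∃ m : ℕ, 1 ≤ m ∧ (FF p hp ε hε hub (j+1)).1 = m * (2*(2*(FF p hp ε hε hub (j+1)).2)+1) ∧
      (rmu p (2*(FF p hp ε hε hub (j+1)).2))^m ≤ 1/((j+1:ℕ)+1) := by
  have h2 : (FF p hp ε hε hub (j+1)).2
      = (step_odd p ε hε hub (j+1) (FF p hp ε hε hub j).1).choose := rfl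
  have hspec := (step_odd p ε hε hub (j+1) (FF p hp ε hε hub j).1).choose_spec
  rw [← h2] at hspec
  set n := (FF p hp ε hε hub (j+1)).2 with hn
  have h1 : (FF p hp ε hε hub (j+1)).1
      = (step_even (rmu p (2*n)) (rmu_mem p hp (2*n)).1 (rmu_mem p hp (2*n)).2 (j+1)).choose
        * (2*(2*n)+1) := rfl
  have hespec := (step_even (rmu p (2*n)) (rmu_mem p hp (2*n)).1
    (rmu_mem p hp (2*n)).2 (j+1)).choose_spec
  exact ⟨hspec.1, hspec.2, _, hespec.1, h1, hespec.2⟩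

end Aux

theorem statement_10 (p : ℕ → ℝ) (hp : ∀ l, 1 ≤ l → 0 ≤ p l ∧ p l < 1)
    (ε : ℝ) (hε : 0 < ε)
    (hub : ∀ m : ℕ, ∃ n : ℕ, m ≤ n ∧ (n : ℝ) ^ ε ≤ ∑ l ∈ Finset.Icc 1 n, p l) :
    ∃ q : ℕ → ℝ, Gen3 p q ∧
      limsup (fun n => probEvent q n
        (fun G => ∃ x : Fin n, ∀ y : Fin n, ¬ G.Adj x y)) atTop = 1 ∧
      limsup (fun n => probEvent q n
        (fun G => ¬ ∃ x : Fin n, ∀ y : Fin n, ¬ G.Adj x y)) atTop = 1 := by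
  classical
  set F := FF p hp ε hε hub with hF
  set cj : ℕ → ℕ := fun j => (F j).1 with hcj
  set nj : ℕ → ℕ := fun j => (F j).2 with hnj
  have hspec := fun j => FF_spec p hp ε hε hub j
  have hgt : ∀ j, nj (j+1) > cj j := fun j => (hspec j).1
  have hodd : ∀ j, (2*(nj (j+1)):ℝ) *
      Real.exp (-((∑ l ∈ Finset.Icc 1 (nj (j+1)), p l) - (cj j))) ≤ 1/((j+1:ℕ)+1) :=
    fun j => (hspec j).2.1
  have hev : ∀ j, ∃ m : ℕ, 1 ≤ m ∧ cj (j+1) = m * (2*(2*(nj (j+1)))+1) ∧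
      (rmu p (2*(nj (j+1))))^m ≤ 1/((j+1:ℕ)+1) := fun j => (hspec j).2.2
  have hn1 : ∀ j, 1 ≤ nj (j+1) := fun j => by have := hgt j; omega
  have horder : ∀ j, cj j < 2*(nj (j+1)) ∧ 2*(nj (j+1)) < cj (j+1) := by
    intro j
    obtain ⟨m, hm1, hmeq, -⟩ := hev j
    constructor
    · have := hgt j; omega
    · rw [hmeq]; nlinarith [hn1 j]
  have hcc : ∀ j, cj j < cj (j+1) := fun j => lt_trans (horder j).1 (horder j).2
  have hmono : ∀ i j, i ≤ j → cj i ≤ cj j :=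
    fun i j h => monotone_nat_of_le_succ (fun n => (hcc n).le) h
  have hjle : ∀ j, j ≤ cj j := by
    intro j
    induction j with
    | zero => omega
    | succ j ih => have := hcc j; omega
  -- the sequence q
  set q : ℕ → ℝ := fun l => if ∃ j, cj j < l ∧ l ≤ 2 * nj (j+1) then p l else 0 with hq
  have hkept : ∀ l, (∃ j, cj j < l ∧ l ≤ 2 * nj (j+1)) → q l = p l := by
    intro l h; rw [hq]; exact if_pos h
  have hzero2 : ∀ j l, 2*(nj (j+1)) < l → l ≤ cj (j+1) → q l = 0 := by
    intro j l hl1 hl2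
    rw [hq]
    refine if_neg ?_
    rintro ⟨i, hi1, hi2⟩
    rcases Nat.lt_or_ge i (j+1) with h' | h'
    · rcases Nat.lt_or_ge i j with h'' | h''
      · have h3 : 2*(nj (i+1)) < cj (i+1) := (horder i).2
        have h4 : cj (i+1) ≤ cj j := hmono _ _ (by omega)
        have h5 : cj j < 2*(nj (j+1)) := (horder j).1
        omega
      · have : i = j := by omega
        subst this
        omega
    · have h4 : cj (j+1) ≤ cj i := hmono _ _ h'
      omega
  have hqp : ∀ l, 1 ≤ l → 0 ≤ q l ∧ q l ≤ p l := by
    intro l hl1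
    rw [hq]
    dsimp only
    split
    · exact ⟨(hp l hl1).1, le_refl _⟩
    · exact ⟨le_refl _, (hp l hl1).1⟩
  have hq01 : ∀ l, 1 ≤ l → 0 ≤ q l ∧ q l ≤ 1 := by
    intro l hl1
    obtain ⟨h0, h1⟩ := hqp l hl1
    exact ⟨h0, le_trans h1 (hp l hl1).2.le⟩
  have hGen3 : Gen3 p q := by
    intro l hl1
    rw [hq]
    dsimp only
    split
    · exact Or.inr rfl
    · exact Or.inl rfl
  -- sum deficit
  have hsum : ∀ j, (∑ l ∈ Finset.Icc 1 (nj (j+1)), p l) - (cj j : ℝ)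
      ≤ ∑ l ∈ Finset.Icc 1 (nj (j+1)), q l := by
    intro j
    have hterm : ∀ l ∈ Finset.Icc 1 (nj (j+1)), p l - q l
        ≤ (if l ≤ cj j then (1:ℝ) else 0) := by
      intro l hl
      obtain ⟨hl1, hl2⟩ := Finset.mem_Icc.1 hl
      by_cases hlc : l ≤ cj j
      · rw [if_pos hlc]
        have := (hp l hl1).2
        have := (hqp l hl1).1
        linarith
      · rw [if_neg hlc]
        have : q l = p l := hkept l ⟨j, by omega, by omega⟩
        linarith
    have h1 : ∑ l ∈ Finset.Icc 1 (nj (j+1)), (p l - q l)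
        ≤ ∑ l ∈ Finset.Icc 1 (nj (j+1)), (if l ≤ cj j then (1:ℝ) else 0) :=
      Finset.sum_le_sum hterm
    have h2 : ∑ l ∈ Finset.Icc 1 (nj (j+1)), (if l ≤ cj j then (1:ℝ) else 0)
        ≤ (cj j : ℝ) := by
      rw [Finset.sum_boole]
      have hsub : (Finset.Icc 1 (nj (j+1))).filter (fun l => l ≤ cj j)
          ⊆ Finset.Icc 1 (cj j) := by
        intro l hl
        obtain ⟨hm, hc⟩ := Finset.mem_filter.1 hl
        obtain ⟨h1', -⟩ := Finset.mem_Icc.1 hm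
        exact Finset.mem_Icc.2 ⟨h1', hc⟩
      have := Finset.card_le_card hsub
      rw [Nat.card_Icc] at this
      exact_mod_cast Nat.cast_le.2 (le_trans this (le_of_eq (Nat.add_sub_cancel _ _)))
    rw [Finset.sum_sub_distrib] at h1
    linarith
  -- estimate at sizes 2 * nj (j+1)
  have estA : ∀ j, probEvent q (2*(nj (j+1)))
      (fun G => ∃ x, ∀ y, ¬ G.Adj x y) ≤ 1/((j:ℝ)+1+1) := by
    intro j
    have h1 := upper_bound hq01 (hn1 j)
    have h2 : Real.exp (-(∑ l ∈ Finset.Icc 1 (nj (j+1)), q l))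
        ≤ Real.exp (-((∑ l ∈ Finset.Icc 1 (nj (j+1)), p l) - (cj j : ℝ))) :=
      Real.exp_le_exp.2 (by linarith [hsum j])
    have h3 := hodd j
    push_cast at h3
    calc probEvent q (2*(nj (j+1))) (fun G => ∃ x, ∀ y, ¬ G.Adj x y)
        ≤ (2*(nj (j+1)):ℝ) * Real.exp (-(∑ l ∈ Finset.Icc 1 (nj (j+1)), q l)) := h1
      _ ≤ (2*(nj (j+1)):ℝ) *
            Real.exp (-((∑ l ∈ Finset.Icc 1 (nj (j+1)), p l) - (cj j : ℝ))) := by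
          apply mul_le_mul_of_nonneg_left h2 (by positivity)
      _ ≤ 1/((j:ℝ)+1+1) := h3
  -- estimate at sizes cj (j+1)
  have estB : ∀ j, probEvent q (cj (j+1))
      (fun G => ¬ ∃ x, ∀ y, ¬ G.Adj x y) ≤ 1/((j:ℝ)+1+1) := by
    intro j
    obtain ⟨m, hm1, hmeq, hmbd⟩ := hev j
    set B := 2*(nj (j+1)) with hB
    set μ : ℝ := ∏ l ∈ Finset.Icc 1 B, (1 - p l) with hμ
    have hμ0 : 0 < μ := mu_pos p hp B
    have hμ1 : μ ≤ 1 := mu_le_one p hp B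
    have hμfact : ∀ l, 1 ≤ l → l ≤ B → μ ≤ 1 - q l := by
      intro l hl1 hlB
      have hsingle : μ ≤ 1 - p l := by
        have := prod_subset_le_prod (S := {l}) (T := Finset.Icc 1 B)
          (by simp [Finset.mem_Icc, hl1, hlB]) (fun l' => 1 - p l')
          (fun l' hl' => by have := (hp l' (Finset.mem_Icc.1 hl').1).2; linarith)
          (fun l' hl' => by have := (hp l' (Finset.mem_Icc.1 hl').1).1; linarith)
        rw [Finset.prod_singleton] at this
        exact this
      have := (hqp l hl1).2
      linarith
    have hzero' : ∀ l, B < l → l < m * (2*B+1) → q l = 0 := by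
      intro l hlB hlm
      refine hzero2 j l hlB ?_
      rw [hmeq]
      omega
    have hlb := lower_bound hq01 (by have := hn1 j; omega : 1 ≤ B) hμ0 hμ1 hμfact hzero' (m := m)
    rw [← hmeq] at hlb
    refine hlb.trans ?_
    have h3 := hmbd
    push_cast at h3
    exact h3
  -- complement relations
  have hcompl : ∀ (N : ℕ), probEvent q N (fun G => ¬ ∃ x, ∀ y, ¬ G.Adj x y)
      = 1 - probEvent q N (fun G => ∃ x, ∀ y, ¬ G.Adj x y) := by
    intro N
    have := probEvent_add_compl q N (fun G => ∃ x, ∀ y, ¬ G.Adj x y)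
    linarith
  refine ⟨q, hGen3, ?_, ?_⟩
  · refine limsup_eq_one_of_freq _ (fun n => probEvent_le_one hq01 n _) ?_
    intro k
    refine ⟨cj (k+1), by have := hjle (k+1); omega, ?_⟩
    have h1 := estB k
    rw [hcompl (cj (k+1))] at h1
    have h2 : (1:ℝ)/((k:ℝ)+1+1) ≤ 1/((k:ℝ)+1) :=
      one_div_le_one_div_of_le (by positivity) (by linarith)
    linarith
  · refine limsup_eq_one_of_freq _ (fun n => probEvent_le_one hq01 n _) ?_
    intro k
    refine ⟨2*(nj (k+1)), by have := hjle k; have := (horder k).1; omega, ?_⟩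
    have h1 := estA k
    rw [hcompl (2*(nj (k+1)))]
    have h2 : (1:ℝ)/((k:ℝ)+1+1) ≤ 1/((k:ℝ)+1) :=
      one_div_le_one_div_of_le (by positivity) (by linarith)
    linarith
end

section
/- Let p̄ = (p_1, p_2, ...) be a sequence with p_i ∈ {0, 1} for all i > 0 and such that U*(p̄) := {l > 0 : p_l = 1} is finite. Then M^n_{p̄} satisfies the 0-1 law for L. -/
open FirstOrder Filter

/-- `U*(p̄) = {l > 0 : p_l = 1}`. -/
def Ustar (p : ℕ → ℝ) : Set ℕ := {l | 0 < l ∧ p l = 1}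

namespace ZOL01
open FirstOrder.Language

/-- quantifier rank of a graph formula -/
def qr : ∀ {k : ℕ}, Language.graph.BoundedFormula Empty k → ℕ
  | _, .falsum => 0
  | _, .equal _ _ => 0
  | _, .rel _ _ => 0
  | _, .imp f g => max (qr f) (qr g)
  | _, .all f => qr f + 1

/-- the distance graph with distance set D -/
def distG (D : Set ℕ) (n : ℕ) : SimpleGraph (Fin n) where
  Adj i j := i ≠ j ∧ Nat.dist i.val j.val ∈ D
  symm := ⟨fun i j h => ⟨h.1.symm, by rw [Nat.dist_comm]; exact h.2⟩⟩
  loopless := ⟨fun i h => h.1 rfl⟩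

def good (d t : ℕ) (u v : ℤ × ℤ) : Prop :=
  (u.1 - v.1 = u.2 - v.2) ∨
  ((d * 3 ^ t : ℤ) < u.1 - v.1 ∧ (d * 3 ^ t : ℤ) < u.2 - v.2) ∨
  (u.1 - v.1 < -(d * 3 ^ t : ℤ) ∧ u.2 - v.2 < -(d * 3 ^ t : ℤ))

lemma good_swap {d t : ℕ} {u v : ℤ × ℤ} (h : good d t u v) :
    good d t u.swap v.swap := by
  rcases h with h | h | h
  · exact Or.inl (by simpa [Prod.swap] using h.symm)
  · exact Or.inr (Or.inl ⟨h.2, h.1⟩)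
  · exact Or.inr (Or.inr ⟨h.2, h.1⟩)

lemma good_symm {d t : ℕ} {u v : ℤ × ℤ} (h : good d t u v) : good d t v u := by
  rcases h with h | h | h
  · exact Or.inl (by omega)
  · exact Or.inr (Or.inr ⟨by omega, by omega⟩)
  · exact Or.inr (Or.inl ⟨by omega, by omega⟩)

lemma good_mono {d t t' : ℕ} (htt : t' ≤ t) {u v : ℤ × ℤ} (h : good d t u v) :
    good d t' u v := by
  have h3 : (d * 3 ^ t' : ℤ) ≤ d * 3 ^ t := by
    have : (3:ℤ) ^ t' ≤ 3 ^ t := pow_le_pow_right₀ (by norm_num) htt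
    have : (0:ℤ) ≤ d := Int.natCast_nonneg d
    nlinarith
  rcases h with h | h | h
  · exact Or.inl h
  · exact Or.inr (Or.inl ⟨by omega, by omega⟩)
  · exact Or.inr (Or.inr ⟨by omega, by omega⟩)

/-- The key combinatorial step lemma. -/
lemma step {d t n m K : ℕ} (hd : 1 ≤ d) (c : Fin K → ℤ × ℤ)
    (hgood : ∀ i j, good d (t+1) (c i) (c j))
    (h0 : ∃ i, c i = (0, 0)) (h1 : ∃ i, c i = ((n:ℤ) - 1, (m:ℤ) - 1))
    (x : ℤ) (hx0 : 0 ≤ x) (hx1 : x ≤ (n:ℤ) - 1) :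
    ∃ y : ℤ, 0 ≤ y ∧ y ≤ (m:ℤ) - 1 ∧ ∀ i, good d t (x, y) (c i) := by
  set T : ℤ := d * 3 ^ t with hT
  have hT1 : (1:ℤ) ≤ T := by
    have h1 : (1:ℤ) ≤ d := by exact_mod_cast hd
    have h2 : (1:ℤ) ≤ 3 ^ t := one_le_pow₀ (by norm_num)
    nlinarith
  have h3T : (d * 3 ^ (t+1) : ℤ) = 3 * T := by rw [hT]; ring
  suffices h : ∃ y : ℤ, ∀ i, good d t (x, y) (c i) by
    obtain ⟨y, hy⟩ := h
    refine ⟨y, ?_, ?_, hy⟩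
    · obtain ⟨i0, hi0⟩ := h0
      have := hy i0; rw [hi0] at this
      rcases this with h | h | h
      · simp only at h; omega
      · simp only at h; omega
      · simp only at h; omega
    · obtain ⟨i1, hi1⟩ := h1
      have := hy i1; rw [hi1] at this
      rcases this with h | h | h
      · simp only at h; omega
      · simp only at h; omega
      · simp only at h; omega
  by_cases hnear : ∃ i, |x - (c i).1| ≤ T
  · obtain ⟨i, hi⟩ := hnear
    refine ⟨(c i).2 + (x - (c i).1), fun j => ?_⟩
    rcases hgood i j with h | h | h
    · exact Or.inl (by simp only; omega)
    · rw [h3T] at h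
      refine Or.inr (Or.inl ⟨by simp only; rw [abs_le] at hi; omega,
        by simp only; rw [abs_le] at hi; omega⟩)
    · rw [h3T] at h
      refine Or.inr (Or.inr ⟨by simp only; rw [abs_le] at hi; omega,
        by simp only; rw [abs_le] at hi; omega⟩)
  · push_neg at hnear
    -- all pinned points are far from x
    obtain ⟨i0, hi0⟩ := h0
    obtain ⟨i1, hi1⟩ := h1
    have hx0' : T < x := by
      have := hnear i0; rw [hi0] at this; simp only at this
      rw [lt_abs] at this; omega
    -- pick i maximizing (c i).1 among those < x
    have hne : (Finset.univ.filter (fun i => (c i).1 < x)).Nonempty := by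
      refine ⟨i0, Finset.mem_filter.2 ⟨Finset.mem_univ _, ?_⟩⟩
      rw [hi0]; simp only; omega
    obtain ⟨i, hmem, hmax⟩ := Finset.exists_max_image _ (fun i => (c i).1) hne
    have hilt : (c i).1 < x := (Finset.mem_filter.1 hmem).2
    refine ⟨(c i).2 + T + 1, fun j => ?_⟩
    rcases lt_trichotomy ((c j).1) x with hlt | heq | hgt
    · -- j is below x
      have hj_le : (c j).1 ≤ (c i).1 :=
        hmax j (Finset.mem_filter.2 ⟨Finset.mem_univ _, hlt⟩)
      have hj2 : (c j).2 ≤ (c i).2 := by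
        rcases hgood j i with h | h | h
        · omega
        · rw [h3T] at h; omega
        · rw [h3T] at h; omega
      have hfar := hnear j
      rw [lt_abs] at hfar
      refine Or.inr (Or.inl ⟨by simp only; omega, by simp only; omega⟩)
    · exfalso; have := hnear j; rw [heq, sub_self, abs_zero] at this; omega
    · -- j is above x
      have hfar := hnear j
      rw [lt_abs] at hfar
      have hdist : x - (c j).1 < -T := by omega
      have hfari := hnear i
      rw [lt_abs] at hfari
      have hji : 2*T + 2 ≤ (c j).1 - (c i).1 := by omega
      have hj2 : (c i).2 + 2*T + 2 ≤ (c j).2 := by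
        rcases hgood j i with h | h | h
        · omega
        · rw [h3T] at h; obtain ⟨h1, h2⟩ := h; linarith
        · rw [h3T] at h; obtain ⟨h1, h2⟩ := h; linarith
      refine Or.inr (Or.inr ⟨by simp only; omega, by simp only; omega⟩)


def Inv (d t n m : ℕ) {k : ℕ} (a : Fin k → Fin n) (b : Fin k → Fin m) : Prop :=
  ∃ K, ∃ c : Fin K → ℤ × ℤ,
    (∀ i j, good d t (c i) (c j)) ∧ (∃ i, c i = (0, 0)) ∧
    (∃ i, c i = ((n:ℤ) - 1, (m:ℤ) - 1)) ∧
    (∀ i, ∃ j, c j = (((a i).val : ℤ), ((b i).val : ℤ)))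

lemma inv_swap {d t n m k : ℕ} {a : Fin k → Fin n} {b : Fin k → Fin m}
    (h : Inv d t n m a b) : Inv d t m n b a := by
  obtain ⟨K, c, hg, h0, h1, hab⟩ := h
  refine ⟨K, fun i => (c i).swap, fun i j => good_swap (hg i j), ?_, ?_, fun i => ?_⟩
  · obtain ⟨i, hi⟩ := h0; exact ⟨i, by show (c i).swap = _; rw [hi]; rfl⟩
  · obtain ⟨i, hi⟩ := h1; exact ⟨i, by show (c i).swap = _; rw [hi]; rfl⟩
  · obtain ⟨j, hj⟩ := hab i; exact ⟨j, by show (c j).swap = _; rw [hj]; rfl⟩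

lemma good_refl {d t : ℕ} (u : ℤ × ℤ) : good d t u u := Or.inl (by omega)

lemma good_of {d t : ℕ} {x1 y1 x2 y2 : ℤ}
    (h : x1 - x2 = y1 - y2 ∨
      ((d * 3 ^ t : ℤ) < x1 - x2 ∧ (d * 3 ^ t : ℤ) < y1 - y2) ∨
      (x1 - x2 < -(d * 3 ^ t : ℤ) ∧ y1 - y2 < -(d * 3 ^ t : ℤ))) :
    good d t (x1, y1) (x2, y2) := h

lemma inv_step {d t n m k : ℕ} (hd : 1 ≤ d) {a : Fin k → Fin n} {b : Fin k → Fin m}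
    (h : Inv d (t+1) n m a b) (x : Fin n) :
    ∃ y : Fin m, Inv d t n m (Fin.snoc a x) (Fin.snoc b y) := by
  obtain ⟨K, c, hg, h0, h1, hab⟩ := h
  have hx0 : (0:ℤ) ≤ (x.val:ℤ) := Int.natCast_nonneg _
  have hx1 : (x.val:ℤ) ≤ (n:ℤ) - 1 := by have := x.isLt; omega
  obtain ⟨y, hy0, hy1, hy⟩ := step hd c hg h0 h1 (x.val:ℤ) hx0 hx1
  have hm : y.toNat < m := by omega
  refine ⟨⟨y.toNat, hm⟩, K+1, Fin.snoc c ((x.val:ℤ), y), fun i j => ?_, ?_, ?_, fun i => ?_⟩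
  · induction i using Fin.lastCases with
    | last =>
      induction j using Fin.lastCases with
      | last => simp only [Fin.snoc_last]; exact good_refl _
      | cast j => simp only [Fin.snoc_last, Fin.snoc_castSucc]; exact hy j
    | cast i =>
      induction j using Fin.lastCases with
      | last => simp only [Fin.snoc_last, Fin.snoc_castSucc]; exact good_symm (hy i)
      | cast j => simp only [Fin.snoc_castSucc]; exact good_mono (by omega) (hg i j)
  · obtain ⟨i, hi⟩ := h0
    exact ⟨i.castSucc, by rw [Fin.snoc_castSucc, hi]⟩
  · obtain ⟨i, hi⟩ := h1
    exact ⟨i.castSucc, by rw [Fin.snoc_castSucc, hi]⟩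
  · induction i using Fin.lastCases with
    | last =>
      refine ⟨Fin.last K, ?_⟩
      simp only [Fin.snoc_last]
      congr 1
      simp only [Int.toNat_of_nonneg hy0]
    | cast i =>
      obtain ⟨j, hj⟩ := hab i
      exact ⟨j.castSucc, by simp only [Fin.snoc_castSucc, hj]⟩

lemma inv_atomic {D : Set ℕ} {d t n m k : ℕ} (hD : ∀ l ∈ D, l ≤ d)
    {a : Fin k → Fin n} {b : Fin k → Fin m} (h : Inv d t n m a b) (i j : Fin k) :
    (a i = a j ↔ b i = b j) ∧
    ((distG D n).Adj (a i) (a j) ↔ (distG D m).Adj (b i) (b j)) := by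
  obtain ⟨K, c, hg, -, -, hab⟩ := h
  obtain ⟨pi, hpi⟩ := hab i
  obtain ⟨pj, hpj⟩ := hab j
  have e1 : (c pi).1 = ((a i).val : ℤ) := by rw [hpi]
  have e2 : (c pi).2 = ((b i).val : ℤ) := by rw [hpi]
  have e3 : (c pj).1 = ((a j).val : ℤ) := by rw [hpj]
  have e4 : (c pj).2 = ((b j).val : ℤ) := by rw [hpj]
  have hgij := hg pi pj
  rw [good, e1, e2, e3, e4] at hgij
  have hTd : (d:ℤ) ≤ (d:ℤ) * 3 ^ t := by
    have h1 : (1:ℤ) ≤ 3 ^ t := one_le_pow₀ (by norm_num)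
    nlinarith [Int.natCast_nonneg d]
  have cast_dist : ∀ u v : ℕ, (Nat.dist u v : ℤ) = |(u:ℤ) - (v:ℤ)| := by
    intro u v
    rcases le_total u v with h | h
    · rw [abs_sub_comm, abs_of_nonneg (by omega : (0:ℤ) ≤ (v:ℤ) - (u:ℤ)),
        Nat.dist_eq_sub_of_le h]
      omega
    · rw [abs_of_nonneg (by omega : (0:ℤ) ≤ (u:ℤ) - (v:ℤ)),
        Nat.dist_eq_sub_of_le_right h]
      omega
  have heq : (a i = a j ↔ b i = b j) := by
    rw [Fin.ext_iff, Fin.ext_iff]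
    rcases hgij with h | h | h
    · omega
    · constructor <;> intro hc <;> omega
    · constructor <;> intro hc <;> omega
  refine ⟨heq, ?_⟩
  show ((a i ≠ a j ∧ Nat.dist (a i).val (a j).val ∈ D) ↔
       (b i ≠ b j ∧ Nat.dist (b i).val (b j).val ∈ D))
  have hda := cast_dist (a i).val (a j).val
  have hdb := cast_dist (b i).val (b j).val
  rcases hgij with h | h | h
  · have hdd : Nat.dist (a i).val (a j).val = Nat.dist (b i).val (b j).val := by
      have habs : |((a i).val:ℤ) - ((a j).val:ℤ)| = |((b i).val:ℤ) - ((b j).val:ℤ)| := by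
        rw [h]
      omega
    rw [hdd]
    exact and_congr (not_congr heq) Iff.rfl
  · have h1 : ¬ Nat.dist (a i).val (a j).val ∈ D := by
      intro hc
      have h2 := hD _ hc
      have h4 : |((a i).val:ℤ) - ((a j).val:ℤ)| ≤ d := by rw [← hda]; exact_mod_cast h2
      rw [abs_le] at h4
      omega
    have h2 : ¬ Nat.dist (b i).val (b j).val ∈ D := by
      intro hc
      have h2 := hD _ hc
      have h4 : |((b i).val:ℤ) - ((b j).val:ℤ)| ≤ d := by rw [← hdb]; exact_mod_cast h2
      rw [abs_le] at h4
      omega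
    constructor <;> intro hc <;> exact absurd hc.2 (by assumption)
  · have h1 : ¬ Nat.dist (a i).val (a j).val ∈ D := by
      intro hc
      have h2 := hD _ hc
      have h4 : |((a i).val:ℤ) - ((a j).val:ℤ)| ≤ d := by rw [← hda]; exact_mod_cast h2
      rw [abs_le] at h4
      omega
    have h2 : ¬ Nat.dist (b i).val (b j).val ∈ D := by
      intro hc
      have h2 := hD _ hc
      have h4 : |((b i).val:ℤ) - ((b j).val:ℤ)| ≤ d := by rw [← hdb]; exact_mod_cast h2
      rw [abs_le] at h4
      omega
    constructor <;> intro hc <;> exact absurd hc.2 (by assumption)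

lemma term_eq {k : ℕ} (t : Language.graph.Term (Empty ⊕ Fin k)) :
    ∃ i : Fin k, t = Language.Term.var (Sum.inr i) := by
  cases t with
  | var v =>
    rcases v with e | i
    · exact e.elim
    · exact ⟨i, rfl⟩
  | func f _ => exact isEmptyElim f

/-- Realization in the distance graph structure. -/
def RealizeD (D : Set ℕ) {n k : ℕ} (φ : Language.graph.BoundedFormula Empty k)
    (xs : Fin k → Fin n) : Prop :=
  @Language.BoundedFormula.Realize Language.graph (Fin n) (distG D n).structure Empty k φ
    Empty.elim xs

lemma realize_iff {D : Set ℕ} {d : ℕ} (hd : 1 ≤ d) (hD : ∀ l ∈ D, l ≤ d) {n m : ℕ} :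
    ∀ {k : ℕ} (φ : Language.graph.BoundedFormula Empty k) (t : ℕ), qr φ ≤ t →
    ∀ (a : Fin k → Fin n) (b : Fin k → Fin m), Inv d t n m a b →
    (RealizeD D φ a ↔ RealizeD D φ b)
  | k, .falsum, t, ht, a, b, hinv => Iff.rfl
  | k, .equal t₁ t₂, t, ht, a, b, hinv => by
    obtain ⟨i, rfl⟩ := term_eq t₁
    obtain ⟨j, rfl⟩ := term_eq t₂
    exact (inv_atomic hD hinv i j).1
  | k, .rel R ts, t, ht, a, b, hinv => by
    cases R
    obtain ⟨i, hi⟩ := term_eq (ts 0)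
    obtain ⟨j, hj⟩ := term_eq (ts 1)
    have key : ∀ (N : ℕ) (xs : Fin k → Fin N),
        RealizeD D (.rel Language.adj ts) xs ↔ (distG D N).Adj (xs i) (xs j) := by
      intro N xs
      letI := (distG D N).structure
      have h0 : RealizeD D (.rel Language.adj ts) xs ↔
          (distG D N).Adj (Language.Term.realize (Sum.elim Empty.elim xs) (ts 0))
            (Language.Term.realize (Sum.elim Empty.elim xs) (ts 1)) := Iff.rfl
      rw [h0, hi, hj]
      exact Iff.rfl
    rw [key n a, key m b]
    exact (inv_atomic hD hinv i j).2
  | k, .imp f g, t, ht, a, b, hinv => by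
    have h1 := realize_iff hd hD f t (le_trans (le_max_left _ _) ht) a b hinv
    have h2 := realize_iff hd hD g t (le_trans (le_max_right _ _) ht) a b hinv
    show (RealizeD D f a → RealizeD D g a) ↔ (RealizeD D f b → RealizeD D g b)
    rw [h1, h2]
  | k, .all f, t, ht, a, b, hinv => by
    rcases t with _ | s
    · exact absurd ht (by simp [qr])
    have hqf : qr f ≤ s := by
      have : qr (BoundedFormula.all f) = qr f + 1 := rfl
      omega
    show (∀ x, RealizeD D f (Fin.snoc a x)) ↔ (∀ y, RealizeD D f (Fin.snoc b y))
    constructor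
    · intro H y
      obtain ⟨x, hx⟩ := inv_step hd (inv_swap hinv) y
      exact (realize_iff hd hD f s hqf _ _ (inv_swap hx)).1 (H x)
    · intro H x
      obtain ⟨y, hy⟩ := inv_step hd hinv x
      exact (realize_iff hd hD f s hqf _ _ hy).2 (H y)

open Classical in
/-- The canonical (deterministic) edge configuration. -/
noncomputable def canon (p : ℕ → ℝ) (n : ℕ) : Sym2 (Fin n) → Bool :=
  fun e => if e.IsDiag then false else if edgeProb p e = 1 then true else false

lemma weight_canon (p : ℕ → ℝ) (n : ℕ) (hp : ∀ i, 1 ≤ i → p i = 0 ∨ p i = 1) :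
    weight p (canon p n) = 1 := by
  unfold weight
  apply Finset.prod_eq_one
  intro e _
  induction e using Sym2.ind with
  | _ i j =>
    by_cases hdiag : Sym2.IsDiag s(i, j)
    · simp [canon, hdiag]
    · have hij : i ≠ j := by rwa [Sym2.mk_isDiag_iff] at hdiag
      have hep : edgeProb p s(i, j) = p (Nat.dist i.val j.val) := rfl
      have hd1 : 1 ≤ Nat.dist i.val j.val :=
        Nat.dist_pos_of_ne (fun hc => hij (Fin.ext hc))
      rcases hp _ hd1 with h | h
      · have hne : ¬ edgeProb p s(i, j) = 1 := by rw [hep, h]; norm_num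
        simp [canon, hdiag, hne, hep, h]
      · have he : edgeProb p s(i, j) = 1 := by rw [hep, h]
        simp [canon, hdiag, he]

lemma weight_ne (p : ℕ → ℝ) (n : ℕ) (hp : ∀ i, 1 ≤ i → p i = 0 ∨ p i = 1)
    (f : Sym2 (Fin n) → Bool) (hf : f ≠ canon p n) : weight p f = 0 := by
  rw [Function.ne_iff] at hf
  obtain ⟨e, he⟩ := hf
  unfold weight
  apply Finset.prod_eq_zero (Finset.mem_univ e)
  induction e using Sym2.ind with
  | _ i j =>
    by_cases hdiag : Sym2.IsDiag s(i, j)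
    · have hc : canon p n s(i, j) = false := by simp [canon, hdiag]
      rw [hc] at he
      have hfe : f s(i, j) = true := by
        cases hb : f s(i, j)
        · exact absurd hb he
        · rfl
      simp [hdiag, hfe]
    · have hij : i ≠ j := by rwa [Sym2.mk_isDiag_iff] at hdiag
      have hep : edgeProb p s(i, j) = p (Nat.dist i.val j.val) := rfl
      have hd1 : 1 ≤ Nat.dist i.val j.val :=
        Nat.dist_pos_of_ne (fun hc => hij (Fin.ext hc))
      by_cases h1 : edgeProb p s(i, j) = 1
      · have hc : canon p n s(i, j) = true := by simp [canon, hdiag, h1]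
        rw [hc] at he
        have hfe : f s(i, j) = false := by
          cases hb : f s(i, j)
          · rfl
          · exact absurd hb he
        simp [hdiag, hfe, h1]
      · have h0 : edgeProb p s(i, j) = 0 := by
          rcases hp _ hd1 with h | h
          · rw [hep, h]
          · exact absurd (by rw [hep, h]) h1
        have hc : canon p n s(i, j) = false := by simp [canon, hdiag, h1]
        rw [hc] at he
        have hfe : f s(i, j) = true := by
          cases hb : f s(i, j)
          · exact absurd hb he
          · rfl
        simp [hdiag, hfe, h0]

open Classical in
lemma probSat_eq (p : ℕ → ℝ) (hp : ∀ i, 1 ≤ i → p i = 0 ∨ p i = 1) (n : ℕ)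
    (ψ : Language.graph.Sentence) :
    probSat p n ψ =
      if @Language.Sentence.Realize _ _ (graphOf (canon p n)).structure ψ then 1 else 0 := by
  unfold probSat probEvent
  rw [Finset.sum_eq_single (canon p n)
    (fun f _ hfne => by rw [weight_ne p n hp f hfne]; split_ifs <;> rfl)
    (fun h => absurd (Finset.mem_univ _) h)]
  rw [weight_canon p n hp]

lemma graphOf_canon (p : ℕ → ℝ) (n : ℕ) :
    graphOf (canon p n) = distG (Ustar p) n := by
  ext i j
  show (i ≠ j ∧ canon p n s(i, j) = true) ↔ (i ≠ j ∧ Nat.dist i.val j.val ∈ Ustar p)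
  constructor
  · rintro ⟨hij, hc⟩
    refine ⟨hij, ?_⟩
    have hdiag : ¬ Sym2.IsDiag s(i, j) := by rwa [Sym2.mk_isDiag_iff]
    have h1 : edgeProb p s(i, j) = 1 := by
      by_contra hne
      simp [canon, hdiag, hne] at hc
    have hep : edgeProb p s(i, j) = p (Nat.dist i.val j.val) := rfl
    refine ⟨Nat.dist_pos_of_ne (fun hc' => hij (Fin.ext hc')), by rw [← hep]; exact h1⟩
  · rintro ⟨hij, hmem⟩
    refine ⟨hij, ?_⟩
    have hdiag : ¬ Sym2.IsDiag s(i, j) := by rwa [Sym2.mk_isDiag_iff]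
    have hep : edgeProb p s(i, j) = p (Nat.dist i.val j.val) := rfl
    have h1 : edgeProb p s(i, j) = 1 := by rw [hep]; exact hmem.2
    simp [canon, hdiag, h1]

lemma sentence_realize_distG (D : Set ℕ) (n : ℕ) (ψ : Language.graph.Sentence) :
    (@Language.Sentence.Realize _ _ (distG D n).structure ψ) ↔
      RealizeD (n := n) D ψ (fun i : Fin 0 => i.elim0) := by
  letI := (distG D n).structure
  unfold Language.Sentence.Realize Language.Formula.Realize RealizeD
  have e1 : (default : Empty → Fin n) = Empty.elim := funext fun x => x.elim
  have e2 : (default : Fin 0 → Fin n) = (fun i : Fin 0 => i.elim0) :=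
    funext fun i => i.elim0
  rw [e1, e2]

end ZOL01

theorem statement_16 (p : ℕ → ℝ) (hp : ∀ i, 1 ≤ i → p i = 0 ∨ p i = 1)
    (hU : (Ustar p).Finite) : ZeroOneLaw p := by
  intro ψ
  classical
  set D := Ustar p with hDdef
  set d : ℕ := hU.toFinset.sup id + 1 with hddef
  have hd1 : 1 ≤ d := Nat.le_add_left 1 _
  have hDd : ∀ l ∈ D, l ≤ d := by
    intro l hl
    have h1 : l ∈ hU.toFinset := hU.mem_toFinset.2 hl
    have h2 := Finset.le_sup (f := id) h1
    simp only [id] at h2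
    omega
  set r : ℕ := ZOL01.qr ψ with hrdef
  set N : ℕ := d * 3 ^ r + 2 with hNdef
  have hcast : ((d * 3 ^ r : ℕ) : ℤ) = (d:ℤ) * 3 ^ r := by push_cast; ring
  have hinv : ∀ n, N ≤ n →
      ZOL01.Inv d r n N (fun i : Fin 0 => i.elim0) (fun i : Fin 0 => i.elim0) := by
    intro n hn
    have hb1 : (d:ℤ) * 3 ^ r + 2 ≤ (N:ℤ) := by omega
    have hb2 : (d:ℤ) * 3 ^ r + 2 ≤ (n:ℤ) := by omega
    refine ⟨2, fun i => if i.val = 0 then ((0:ℤ), (0:ℤ)) else ((n:ℤ) - 1, (N:ℤ) - 1),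
      fun i j => ?_, ⟨0, rfl⟩, ⟨1, rfl⟩, fun i => i.elim0⟩
    by_cases hi : i.val = 0 <;> by_cases hj : j.val = 0 <;> dsimp only
    · rw [if_pos hi, if_pos hj]; exact ZOL01.good_refl _
    · rw [if_pos hi, if_neg hj]
      exact ZOL01.good_of (Or.inr (Or.inr ⟨by omega, by omega⟩))
    · rw [if_neg hi, if_pos hj]
      exact ZOL01.good_of (Or.inr (Or.inl ⟨by omega, by omega⟩))
    · rw [if_neg hi, if_neg hj]; exact ZOL01.good_refl _
  have hkey : ∀ n, N ≤ n →
      ((@Language.Sentence.Realize _ _ (ZOL01.distG D n).structure ψ) ↔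
        (@Language.Sentence.Realize _ _ (ZOL01.distG D N).structure ψ)) := by
    intro n hn
    rw [ZOL01.sentence_realize_distG, ZOL01.sentence_realize_distG]
    exact ZOL01.realize_iff hd1 hDd ψ r (le_refl r) _ _ (hinv n hn)
  have hps : ∀ n : ℕ, probSat p n ψ =
      if @Language.Sentence.Realize _ _ (ZOL01.distG D n).structure ψ then 1 else 0 := by
    intro n
    rw [ZOL01.probSat_eq p hp n ψ]
    exact if_congr (by rw [ZOL01.graphOf_canon p n]) rfl rfl
  refine ⟨if @Language.Sentence.Realize _ _ (ZOL01.distG D N).structure ψ then 1 else 0,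
    ?_, ?_⟩
  · split_ifs
    · right; rfl
    · left; rfl
  · apply Tendsto.congr' _ tendsto_const_nhds
    filter_upwards [eventually_ge_atTop N] with n hn
    rw [hps n]
    exact if_congr (hkey n hn).symm rfl rfl
end
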